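/- Let a_1 < ... < a_n be positive integers with a_i ≤ 2i - 1, let d = Σ(a_i - i), and let p ≤ -n be an integer. Then (-1)^d · det( binom(p + i - 1, a_i - j) )_{1≤i,j≤n} equals det( binom(|p| + a_i - i - j, a_i - j) )_{1≤i,j≤n}, a nonnegative integer counting weakly increasing (in rows and columns) fillings of Y(a) with entries in {0,...,|p|-n}. In particular, for p = -n this determinant equals (-1)^d. -/

import Mathlib

/-- The generalized binomial coefficient `r choose k` for integer `r`, as a rational. -/
def zchoose (r : ℤ) (k : ℕ) : ℚ :=
  (∏ s ∈ Finset.range k, ((r : ℚ) - s)) / (k.factorial : ℚ)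

/-- Totalization of a sequence `a : Fin n → ℕ` to `ℕ → ℕ` (value `0` out of range). -/
def extSeq (n : ℕ) (a : Fin n → ℕ) : ℕ → ℕ := fun m => if h : m < n then a ⟨m, h⟩ else 0

/-- The Young diagram `Y(a)` associated to a sequence `a₁ < ⋯ < aₙ`:
its `(n+1-i)`-th row from the top has `aᵢ - i` boxes. Rows and columns are 0-indexed. -/
def cellsOf (n : ℕ) (a : Fin n → ℕ) : Finset (ℕ × ℕ) :=
  ((Finset.range n) ×ˢ (Finset.range (2 * n))).filter fun u =>
    u.2 < extSeq n a (n - 1 - u.1) - (n - u.1)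



namespace LGV

open Finset

/-- `phi x0 S c` : position on diagonal `c` of the path starting at `x0` with increment set `S`. -/
def phi (x0 : ℕ) (S : Finset ℕ) (c : ℕ) : ℕ := x0 + (S.filter (· < c)).card

lemma phi_mono (x0 : ℕ) (S : Finset ℕ) {c c' : ℕ} (h : c ≤ c') : phi x0 S c ≤ phi x0 S c' := by
  unfold phi
  have : S.filter (· < c) ⊆ S.filter (· < c') := by
    intro x hx
    rcases Finset.mem_filter.1 hx with ⟨h1, h2⟩
    exact Finset.mem_filter.2 ⟨h1, lt_of_lt_of_le h2 h⟩
  exact Nat.add_le_add_left (Finset.card_le_card this) _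

lemma phi_start {x0 c0 D : ℕ} {S : Finset ℕ} (hS : S ⊆ Finset.Ico c0 D) {c : ℕ} (hc : c ≤ c0) :
    phi x0 S c = x0 := by
  unfold phi
  have : S.filter (· < c) = ∅ := by
    apply Finset.filter_false_of_mem
    intro x hx
    have := (Finset.mem_Ico.1 (hS hx)).1
    omega
  simp [this]

lemma phi_stop {x0 c0 D : ℕ} {S : Finset ℕ} (hS : S ⊆ Finset.Ico c0 D) {c : ℕ} (hc : D ≤ c) :
    phi x0 S c = x0 + S.card := by
  unfold phi
  congr 2
  apply Finset.filter_true_of_mem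
  intro x hx
  have := (Finset.mem_Ico.1 (hS hx)).2
  omega

lemma phi_le_total (x0 : ℕ) (S : Finset ℕ) (c : ℕ) : phi x0 S c ≤ x0 + S.card :=
  Nat.add_le_add_left (Finset.card_le_card (Finset.filter_subset _ _)) _

lemma phi_le_add (x0 : ℕ) (S : Finset ℕ) {c c' : ℕ} (h : c ≤ c') :
    phi x0 S c' ≤ phi x0 S c + (c' - c) := by
  unfold phi
  have hsplit : S.filter (· < c') ⊆ S.filter (· < c) ∪ (Finset.Ico c c') := by
    intro x hx
    rcases Finset.mem_filter.1 hx with ⟨hxS, hxc⟩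
    by_cases hx2 : x < c
    · exact Finset.mem_union.2 (Or.inl (Finset.mem_filter.2 ⟨hxS, hx2⟩))
    · exact Finset.mem_union.2 (Or.inr (Finset.mem_Ico.2 ⟨by omega, hxc⟩))
  calc x0 + (S.filter (· < c')).card
      ≤ x0 + ((S.filter (· < c) ∪ Finset.Ico c c').card) :=
        Nat.add_le_add_left (Finset.card_le_card hsplit) _
    _ ≤ x0 + ((S.filter (· < c)).card + (Finset.Ico c c').card) :=
        Nat.add_le_add_left (Finset.card_union_le _ _) _
    _ = x0 + (S.filter (· < c)).card + (c' - c) := by rw [Nat.card_Ico]; omega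

lemma phi_lower {x0 c0 D : ℕ} {S : Finset ℕ} (hS : S ⊆ Finset.Ico c0 D) (c : ℕ) :
    x0 + S.card ≤ phi x0 S c + (D - c) := by
  by_cases h : c ≤ D
  · have := phi_le_add x0 S h
    rw [phi_stop hS (le_refl D)] at this
    omega
  · have := phi_stop (x0 := x0) hS (le_of_not_ge h)
    have h2 := phi_le_total x0 S c
    omega

lemma phi_succ_le (x0 : ℕ) (S : Finset ℕ) (c : ℕ) : phi x0 S (c+1) ≤ phi x0 S c + 1 := by
  have := phi_le_add x0 S (show c ≤ c + 1 by omega)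
  omega

lemma le_phi_start (x0 : ℕ) (S : Finset ℕ) (c : ℕ) : x0 ≤ phi x0 S c := Nat.le_add_right _ _

/-- Splice of two paths at diagonal `c`. -/
def splice (S S' : Finset ℕ) (c : ℕ) : Finset ℕ :=
  S.filter (· < c) ∪ S'.filter (fun x => ¬ x < c)

lemma splice_filter_lt {S S' : Finset ℕ} {c d : ℕ} (h : d ≤ c) :
    (splice S S' c).filter (· < d) = S.filter (· < d) := by
  ext x
  simp only [splice, Finset.mem_filter, Finset.mem_union]
  constructor
  · rintro ⟨h1 | h1, h2⟩
    · exact ⟨h1.1, h2⟩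
    · exact absurd (lt_of_lt_of_le h2 h) h1.2
  · intro ⟨h1, h2⟩
    exact ⟨Or.inl ⟨h1, lt_of_lt_of_le h2 h⟩, h2⟩

lemma phi_splice_le {x0 : ℕ} (S S' : Finset ℕ) {c d : ℕ} (h : d ≤ c) :
    phi x0 (splice S S' c) d = phi x0 S d := by
  unfold phi; rw [splice_filter_lt h]

lemma phi_splice_ge {x0 x0' : ℕ} (S S' : Finset ℕ) {c d : ℕ} (h : c ≤ d) :
    phi x0 (splice S S' c) d + phi x0' S' c = phi x0 S c + phi x0' S' d := by
  have e1 : (splice S S' c).filter (· < d) =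
      S.filter (· < c) ∪ S'.filter (fun x => ¬ x < c ∧ x < d) := by
    ext x
    simp only [splice, Finset.mem_filter, Finset.mem_union]
    constructor
    · rintro ⟨h1 | h1, h2⟩
      · exact Or.inl ⟨h1.1, h1.2⟩
      · exact Or.inr ⟨h1.1, h1.2, h2⟩
    · rintro (⟨h1, h2⟩ | ⟨h1, h2, h3⟩)
      · exact ⟨Or.inl ⟨h1, h2⟩, lt_of_lt_of_le h2 h⟩
      · exact ⟨Or.inr ⟨h1, h2⟩, h3⟩
  have e2 : S'.filter (· < d) = S'.filter (· < c) ∪ S'.filter (fun x => ¬ x < c ∧ x < d) := by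
    ext x
    simp only [Finset.mem_filter, Finset.mem_union]
    constructor
    · rintro ⟨h1, h2⟩
      by_cases hx : x < c
      · exact Or.inl ⟨h1, hx⟩
      · exact Or.inr ⟨h1, hx, h2⟩
    · rintro (⟨h1, h2⟩ | ⟨h1, h2, h3⟩)
      · exact ⟨h1, lt_of_lt_of_le h2 h⟩
      · exact ⟨h1, h3⟩
  have d1 : Disjoint (S.filter (· < c)) (S'.filter (fun x => ¬ x < c ∧ x < d)) := by
    apply Finset.disjoint_filter_filter'
    exact Set.disjoint_left.2 (fun x hx hx2 => hx2.1 hx)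
  have d2 : Disjoint (S'.filter (· < c)) (S'.filter (fun x => ¬ x < c ∧ x < d)) := by
    apply Finset.disjoint_filter_filter'
    exact Set.disjoint_left.2 (fun x hx hx2 => hx2.1 hx)
  unfold phi
  rw [e1, e2, Finset.card_union_of_disjoint d1, Finset.card_union_of_disjoint d2]
  omega

lemma splice_splice (S S' : Finset ℕ) (c : ℕ) :
    splice (splice S S' c) (splice S' S c) c = S := by
  ext x
  simp only [splice, Finset.mem_filter, Finset.mem_union]
  by_cases h : x < c <;> simp [h]

/-- Discrete intermediate value theorem. -/
lemma ivt {g : ℕ → ℤ} (hstep : ∀ c, g (c+1) ≤ g c + 1 ∧ g c ≤ g (c+1) + 1) :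
    ∀ (k c : ℕ), g c ≤ 0 → 0 ≤ g (c + k) → ∃ d, c ≤ d ∧ d ≤ c + k ∧ g d = 0 := by
  intro k
  induction k with
  | zero =>
    intro c h1 h2
    rw [Nat.add_zero] at h2
    exact ⟨c, le_refl _, by omega, by omega⟩
  | succ k ih =>
    intro c h1 h2
    by_cases h : g (c+1) ≤ 0
    · have h2' : 0 ≤ g (c + 1 + k) := by
        have : c + 1 + k = c + (k+1) := by omega
        rw [this]; exact h2
      obtain ⟨d, hd1, hd2, hd3⟩ := ih (c+1) h h2'
      exact ⟨d, by omega, by omega, hd3⟩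
    · have := (hstep c).1
      exact ⟨c, le_refl _, by omega, by omega⟩



section Main

variable (n q : ℕ) (a : Fin n → ℕ)

/-- ending diagonal of path `i`: endpoint `(a i, q - (i+1))`. -/
def c1 (i : Fin n) : ℕ := a i + (q - ((i : ℕ) + 1))

/-- the set of paths from `(j+1, 0)` to `(a i, q - (i+1))`, encoded by increment sets. -/
def pathSet (j i : Fin n) : Finset (Finset ℕ) :=
  if (j : ℕ) + 1 ≤ a i then
    (Finset.Ico ((j : ℕ) + 1) (c1 n q a i)).powersetCard (a i - ((j : ℕ) + 1))
  else ∅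

lemma mem_pathSet {j i : Fin n} {S : Finset ℕ} :
    S ∈ pathSet n q a j i ↔
      (j : ℕ) + 1 ≤ a i ∧ S ⊆ Finset.Ico ((j : ℕ) + 1) (c1 n q a i) ∧
        S.card = a i - ((j : ℕ) + 1) := by
  unfold pathSet
  split
  · rw [Finset.mem_powersetCard]; tauto
  · simp only [Finset.notMem_empty, false_iff]; tauto

lemma card_pathSet (hq : n ≤ q) (j i : Fin n) :
    ((pathSet n q a j i).card : ℚ) =
      if (j : ℕ) + 1 ≤ a i then
        (((q + a i - ((i : ℕ) + 1)) - ((j : ℕ) + 1)).choose (a i - ((j : ℕ) + 1)) : ℚ)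
      else 0 := by
  unfold pathSet
  have hi : (i : ℕ) + 1 ≤ q := le_trans i.2 hq
  split_ifs with h
  · rw [Finset.card_powersetCard, Nat.card_Ico]
    congr 3
    unfold c1
    omega
  · simp

variable {n q a}

/-- domain (in diagonal coordinates) of a path from start `j` to end `i`. -/
def Dom (j i : Fin n) (c : ℕ) : Prop := (j : ℕ) + 1 ≤ c ∧ c ≤ c1 n q a i

instance {j i : Fin n} {c : ℕ} : Decidable (Dom (q := q) (a := a) j i c) := by
  unfold Dom; infer_instance

/-- paths `j` (to `σ j`) and `j'` (to `σ j'`) meet at diagonal `c`. -/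
def meetPair (σ : Equiv.Perm (Fin n)) (F : Fin n → Finset ℕ) (c : ℕ) (j j' : Fin n) : Prop :=
  j ≠ j' ∧ Dom (q := q) (a := a) j (σ j) c ∧ Dom (q := q) (a := a) j' (σ j') c ∧
    phi ((j : ℕ) + 1) (F j) c = phi ((j' : ℕ) + 1) (F j') c

instance {σ : Equiv.Perm (Fin n)} {F : Fin n → Finset ℕ} {c : ℕ} {j j' : Fin n} :
    Decidable (meetPair (q := q) (a := a) σ F c j j') := by
  unfold meetPair; infer_instance

lemma meetPair_symm {σ : Equiv.Perm (Fin n)} {F : Fin n → Finset ℕ} {c : ℕ} {j j' : Fin n}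
    (h : meetPair (q := q) (a := a) σ F c j j') : meetPair (q := q) (a := a) σ F c j' j :=
  ⟨h.1.symm, h.2.2.1, h.2.1, h.2.2.2.symm⟩

def MeetAt (σ : Equiv.Perm (Fin n)) (F : Fin n → Finset ℕ) (c : ℕ) : Prop :=
  ∃ j j' : Fin n, meetPair (q := q) (a := a) σ F c j j'

instance {σ : Equiv.Perm (Fin n)} {F : Fin n → Finset ℕ} {c : ℕ} :
    Decidable (MeetAt (q := q) (a := a) σ F c) := by
  unfold MeetAt; infer_instance

def Bad (σ : Equiv.Perm (Fin n)) (F : Fin n → Finset ℕ) : Prop :=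
  ∃ c, MeetAt (q := q) (a := a) σ F c

variable (n q a)

def Fam (σ : Equiv.Perm (Fin n)) : Finset (Fin n → Finset ℕ) :=
  Fintype.piFinset fun j => pathSet n q a j (σ j)

variable {n q a}

lemma mem_Fam {σ : Equiv.Perm (Fin n)} {F : Fin n → Finset ℕ} :
    F ∈ Fam n q a σ ↔ ∀ j, F j ∈ pathSet n q a j (σ j) := by
  unfold Fam; exact Fintype.mem_piFinset

/-- key splice-membership: if paths `S : j → i` and `S' : j' → i'` meet at `c`, the splice
is a path `j → i'`. -/
lemma splice_mem {j i j' i' : Fin n} {S S' : Finset ℕ} {c : ℕ}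
    (hS : S ∈ pathSet n q a j i) (hS' : S' ∈ pathSet n q a j' i')
    (hd : Dom (q := q) (a := a) j i c) (hd' : Dom (q := q) (a := a) j' i' c)
    (hphi : phi ((j : ℕ) + 1) S c = phi ((j' : ℕ) + 1) S' c) :
    splice S S' c ∈ pathSet n q a j i' := by
  rw [mem_pathSet] at hS hS' ⊢
  obtain ⟨hg, hsub, hcard⟩ := hS
  obtain ⟨hg', hsub', hcard'⟩ := hS'
  have hsubnew : splice S S' c ⊆ Finset.Ico ((j : ℕ) + 1) (c1 n q a i') := by
    intro x hx
    rcases Finset.mem_union.1 hx with hx1 | hx1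
    · rcases Finset.mem_filter.1 hx1 with ⟨hx2, hx3⟩
      have := Finset.mem_Ico.1 (hsub hx2)
      exact Finset.mem_Ico.2 ⟨this.1, lt_of_lt_of_le hx3 hd'.2⟩
    · rcases Finset.mem_filter.1 hx1 with ⟨hx2, hx3⟩
      have := Finset.mem_Ico.1 (hsub' hx2)
      exact Finset.mem_Ico.2 ⟨by have := hd.1; omega, this.2⟩
  -- cardinality
  have hD : c ≤ max (c1 n q a i) (c1 n q a i') := le_trans hd.2 (le_max_left _ _)
  set D := max (c1 n q a i) (c1 n q a i') with hDdef
  have e1 := phi_splice_ge (x0 := (j : ℕ) + 1) (x0' := (j' : ℕ) + 1) S S' (c := c) (d := D) hD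
  have e2 : phi ((j : ℕ) + 1) (splice S S' c) D = ((j : ℕ) + 1) + (splice S S' c).card := by
    apply phi_stop hsubnew
    exact le_max_right _ _
  have e3 : phi ((j' : ℕ) + 1) S' D = ((j' : ℕ) + 1) + S'.card :=
    phi_stop hsub' (le_max_right _ _)
  have e4 : ((j' : ℕ) + 1) ≤ phi ((j' : ℕ) + 1) S' c := le_phi_start _ _ _
  have e5 : phi ((j : ℕ) + 1) S c ≤ ((j : ℕ) + 1) + S.card := phi_le_total _ _ _
  have e6 : ((j : ℕ) + 1) ≤ phi ((j : ℕ) + 1) S c := le_phi_start _ _ _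
  have e7 : phi ((j' : ℕ) + 1) S' c ≤ ((j' : ℕ) + 1) + S'.card := phi_le_total _ _ _
  constructor
  · -- guard : j + 1 ≤ a i'
    omega
  · exact ⟨hsubnew, by omega⟩

section Chunk3
variable {n q : ℕ} {a : Fin n → ℕ}

lemma q_le_c1 (hq : n ≤ q) (ha1 : ∀ i : Fin n, (i : ℕ) + 1 ≤ a i) (i : Fin n) :
    q ≤ c1 n q a i := by
  have h1 := ha1 i
  have h2 : (i : ℕ) + 1 ≤ q := le_trans i.2 hq
  unfold c1
  omega

lemma perm_eq_one_of_strictMono {σ : Equiv.Perm (Fin n)}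
    (h : ∀ j j' : Fin n, j < j' → σ j < σ j') : σ = 1 := by
  have hsm : StrictMono σ := fun j j' hjj => h j j' hjj
  have hsm' : StrictMono (σ⁻¹ : Equiv.Perm (Fin n)) := by
    intro x y hxy
    rcases lt_trichotomy ((σ⁻¹ : Equiv.Perm (Fin n)) x) ((σ⁻¹ : Equiv.Perm (Fin n)) y) with h1 | h1 | h1
    · exact h1
    · exfalso; have := congrArg σ h1; simp at this; omega
    · exfalso
      have := hsm h1
      simp at this
      omega
  have key : ∀ (f : Fin n → Fin n), StrictMono f → ∀ v (hv : v < n), v ≤ (f ⟨v, hv⟩ : ℕ) := by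
    intro f hf v
    induction v with
    | zero => intro hv; exact Nat.zero_le _
    | succ v ih =>
      intro hv
      have hvn : v < n := by omega
      have h1 := ih hvn
      have h2 : f ⟨v, hvn⟩ < f ⟨v + 1, hv⟩ := hf (by simp [Fin.mk_lt_mk])
      have h3 : (f ⟨v, hvn⟩ : ℕ) < (f ⟨v + 1, hv⟩ : ℕ) := h2
      omega
  ext x
  have h1 : x ≤ σ x := by
    have := key σ hsm x.1 x.2
    exact this
  have h2 : x ≤ (σ⁻¹ : Equiv.Perm (Fin n)) x := by
    have := key (σ⁻¹ : Equiv.Perm (Fin n)) hsm' x.1 x.2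
    exact this
  have h3 : σ x ≤ σ ((σ⁻¹ : Equiv.Perm (Fin n)) x) := hsm.monotone h2
  simp only [Equiv.Perm.inv_def, Equiv.apply_symm_apply] at h3
  have := le_antisymm h1 h3
  simp [this.symm]

/-- Crossing lemma: if the permutation has an inversion, every family meets somewhere. -/
lemma bad_of_ne_one (hq : n ≤ q) (ha : StrictMono a) (ha1 : ∀ i : Fin n, (i : ℕ) + 1 ≤ a i)
    {σ : Equiv.Perm (Fin n)} (hσ : σ ≠ 1) {F : Fin n → Finset ℕ} (hF : F ∈ Fam n q a σ) :
    Bad (q := q) (a := a) σ F := by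
  -- find an inversion
  have hinv : ∃ j j' : Fin n, j < j' ∧ σ j' < σ j := by
    by_contra hc
    push_neg at hc
    apply hσ
    apply perm_eq_one_of_strictMono
    intro j j' hjj
    have h1 := hc j j' hjj
    have h2 : σ j ≠ σ j' := fun h => (ne_of_lt hjj) (σ.injective h)
    omega
  obtain ⟨j, j', hjj, hss⟩ := hinv
  have hFj := (mem_Fam.1 hF) j
  have hFj' := (mem_Fam.1 hF) j'
  rw [mem_pathSet] at hFj hFj'
  obtain ⟨hg, hsub, hcard⟩ := hFj
  obtain ⟨hg', hsub', hcard'⟩ := hFj'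
  set cs : ℕ := (j' : ℕ) + 1 with hcs
  set ce : ℕ := min (c1 n q a (σ j)) (c1 n q a (σ j')) with hce
  have hcsce : cs ≤ ce := by
    have := q_le_c1 (a := a) hq ha1 (σ j)
    have := q_le_c1 (a := a) hq ha1 (σ j')
    have : (j' : ℕ) < n := j'.2
    omega
  set g : ℕ → ℤ := fun c =>
    (phi ((j : ℕ) + 1) (F j) c : ℤ) - (phi ((j' : ℕ) + 1) (F j') c : ℤ) with hg
  have hstep : ∀ c, g (c + 1) ≤ g c + 1 ∧ g c ≤ g (c + 1) + 1 := by
    intro c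
    have s1 := phi_succ_le ((j : ℕ) + 1) (F j) c
    have s2 := phi_succ_le ((j' : ℕ) + 1) (F j') c
    have s3 := phi_mono ((j : ℕ) + 1) (F j) (show c ≤ c + 1 by omega)
    have s4 := phi_mono ((j' : ℕ) + 1) (F j') (show c ≤ c + 1 by omega)
    simp only [hg]
    omega
  have hgcs : g cs ≤ 0 := by
    have e1 : phi ((j' : ℕ) + 1) (F j') cs = (j' : ℕ) + 1 := phi_start hsub' (le_refl _)
    have e2 : phi ((j : ℕ) + 1) (F j) ((j : ℕ) + 1) = (j : ℕ) + 1 := phi_start hsub (le_refl _)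
    have e3 : phi ((j : ℕ) + 1) (F j) cs ≤
        phi ((j : ℕ) + 1) (F j) ((j : ℕ) + 1) + (cs - ((j : ℕ) + 1)) := by
      apply phi_le_add
      omega
    simp only [hg]
    omega
  have hgce : 0 ≤ g ce := by
    have hA : (σ j' : ℕ) < (σ j : ℕ) := hss
    have hAA : a (σ j') < a (σ j) := ha hss
    rcases le_total (c1 n q a (σ j)) (c1 n q a (σ j')) with hcc | hcc
    · have hece : ce = c1 n q a (σ j) := by omega
      have e1 : phi ((j : ℕ) + 1) (F j) ce = ((j : ℕ) + 1) + (F j).card := by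
        rw [hece]; exact phi_stop hsub (le_refl _)
      have e2 : phi ((j' : ℕ) + 1) (F j') ce ≤ ((j' : ℕ) + 1) + (F j').card :=
        phi_le_total _ _ _
      simp only [hg]
      omega
    · have hece : ce = c1 n q a (σ j') := by omega
      have e1 : phi ((j' : ℕ) + 1) (F j') ce = ((j' : ℕ) + 1) + (F j').card := by
        rw [hece]; exact phi_stop hsub' (le_refl _)
      have e2 := phi_lower (x0 := (j : ℕ) + 1) hsub ce
      have e3 : (σ j : ℕ) + 1 ≤ q := le_trans (σ j).2 hq
      have e4 : (σ j' : ℕ) + 1 ≤ q := le_trans (σ j').2 hq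
      have e5 := ha1 (σ j)
      have e6 := ha1 (σ j')
      have hc1 : c1 n q a (σ j) = a (σ j) + (q - ((σ j : ℕ) + 1)) := rfl
      have hc1' : c1 n q a (σ j') = a (σ j') + (q - ((σ j' : ℕ) + 1)) := rfl
      simp only [hg]
      omega
  obtain ⟨d, hd1, hd2, hd3⟩ := ivt hstep (ce - cs) cs hgcs (by
    have : cs + (ce - cs) = ce := by omega
    rw [this]; exact hgce)
  rw [show cs + (ce - cs) = ce by omega] at hd2
  refine ⟨d, j, j', ?_⟩
  refine ⟨ne_of_lt hjj, ⟨?_, ?_⟩, ⟨?_, ?_⟩, ?_⟩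
  · have : (j : ℕ) + 1 < cs := by simp only [hcs]; exact_mod_cast by omega
    omega
  · omega
  · omega
  · omega
  · simp only [hg] at hd3
    omega
end Chunk3

section Chunk4
variable {n q : ℕ} {a : Fin n → ℕ}

lemma min'_congr {α : Type*} [LinearOrder α] {s t : Finset α} (h : s = t)
    (hs : s.Nonempty) (ht : t.Nonempty) : s.min' hs = t.min' ht := by subst h; rfl

def spliceF (F : Fin n → Finset ℕ) (c : ℕ) (j j' : Fin n) : Fin n → Finset ℕ :=
  fun k => if k = j then splice (F j) (F j') c else if k = j' then splice (F j') (F j) c else F k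

lemma spliceF_apply_left {F : Fin n → Finset ℕ} {c : ℕ} {j j' : Fin n} :
    spliceF F c j j' j = splice (F j) (F j') c := by simp [spliceF]

lemma spliceF_apply_right {F : Fin n → Finset ℕ} {c : ℕ} {j j' : Fin n} (h : j ≠ j') :
    spliceF F c j j' j' = splice (F j') (F j) c := by simp [spliceF, h.symm]

lemma spliceF_apply_other {F : Fin n → Finset ℕ} {c : ℕ} {j j' k : Fin n}
    (h1 : k ≠ j) (h2 : k ≠ j') : spliceF F c j j' k = F k := by simp [spliceF, h1, h2]

lemma spliceF_spliceF {F : Fin n → Finset ℕ} {c : ℕ} {j j' : Fin n} (h : j ≠ j') :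
    spliceF (spliceF F c j j') c j j' = F := by
  funext k
  by_cases h1 : k = j
  · subst h1
    rw [spliceF_apply_left, spliceF_apply_left, spliceF_apply_right h, splice_splice]
  · by_cases h2 : k = j'
    · subst h2
      rw [spliceF_apply_right h, spliceF_apply_right h, spliceF_apply_left, splice_splice]
    · rw [spliceF_apply_other (F := spliceF F c j j') h1 h2, spliceF_apply_other h1 h2]

lemma transfer {σ : Equiv.Perm (Fin n)} {F : Fin n → Finset ℕ} {c : ℕ} {j j' : Fin n}
    (hF : F ∈ Fam n q a σ) (hm : meetPair (q := q) (a := a) σ F c j j') :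
    spliceF F c j j' ∈ Fam n q a (σ * Equiv.swap j j') ∧
      (∀ d, d ≤ c → ∀ k k' : Fin n, (meetPair (q := q) (a := a) σ F d k k' ↔
        meetPair (q := q) (a := a) (σ * Equiv.swap j j') (spliceF F c j j') d k k')) := by
  obtain ⟨hjj, hdj, hdj', hphi⟩ := hm
  have happ1 : (σ * Equiv.swap j j') j = σ j' := by
    simp [Equiv.Perm.mul_apply, Equiv.swap_apply_left]
  have happ2 : (σ * Equiv.swap j j') j' = σ j := by
    simp [Equiv.Perm.mul_apply, Equiv.swap_apply_right]
  have happ3 : ∀ k, k ≠ j → k ≠ j' → (σ * Equiv.swap j j') k = σ k := by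
    intro k h1 h2
    simp [Equiv.Perm.mul_apply, Equiv.swap_apply_of_ne_of_ne h1 h2]
  have P2 : ∀ (k : Fin n) (d : ℕ), d ≤ c →
      phi ((k : ℕ) + 1) (spliceF F c j j' k) d = phi ((k : ℕ) + 1) (F k) d := by
    intro k d hd
    by_cases h1 : k = j
    · rw [h1, spliceF_apply_left]; exact phi_splice_le _ _ hd
    · by_cases h2 : k = j'
      · rw [h2, spliceF_apply_right hjj]; exact phi_splice_le _ _ hd
      · rw [spliceF_apply_other h1 h2]
  have P3 : ∀ (k : Fin n) (d : ℕ), d ≤ c →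
      (Dom (q := q) (a := a) k ((σ * Equiv.swap j j') k) d ↔
        Dom (q := q) (a := a) k (σ k) d) := by
    intro k d hd
    by_cases h1 : k = j
    · rw [h1, happ1]
      unfold Dom
      constructor
      · rintro ⟨hx, _⟩; exact ⟨hx, le_trans hd hdj.2⟩
      · rintro ⟨hx, _⟩; exact ⟨hx, le_trans hd hdj'.2⟩
    · by_cases h2 : k = j'
      · rw [h2, happ2]
        unfold Dom
        constructor
        · rintro ⟨hx, _⟩; exact ⟨hx, le_trans hd hdj'.2⟩
        · rintro ⟨hx, _⟩; exact ⟨hx, le_trans hd hdj.2⟩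
      · rw [happ3 k h1 h2]
  constructor
  · rw [mem_Fam]
    intro k
    by_cases h1 : k = j
    · rw [h1, spliceF_apply_left, happ1]
      exact splice_mem (mem_Fam.1 hF j) (mem_Fam.1 hF j') hdj hdj' hphi
    · by_cases h2 : k = j'
      · rw [h2, spliceF_apply_right hjj, happ2]
        exact splice_mem (mem_Fam.1 hF j') (mem_Fam.1 hF j) hdj' hdj hphi.symm
      · rw [spliceF_apply_other h1 h2, happ3 k h1 h2]
        exact mem_Fam.1 hF k
  · intro d hd k k'
    unfold meetPair
    constructor
    · rintro ⟨h1, h2, h3, h4⟩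
      exact ⟨h1, (P3 k d hd).2 h2, (P3 k' d hd).2 h3, by rw [P2 k d hd, P2 k' d hd]; exact h4⟩
    · rintro ⟨h1, h2, h3, h4⟩
      rw [P2 k d hd, P2 k' d hd] at h4
      exact ⟨h1, (P3 k d hd).1 h2, (P3 k' d hd).1 h3, h4⟩

/-- participants at diagonal `c`. -/
def Pset (σ : Equiv.Perm (Fin n)) (F : Fin n → Finset ℕ) (c : ℕ) : Finset (Fin n) :=
  Finset.univ.filter fun k => ∃ k', meetPair (q := q) (a := a) σ F c k k'

/-- partners of `j` at diagonal `c`. -/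
def Qset (σ : Equiv.Perm (Fin n)) (F : Fin n → Finset ℕ) (c : ℕ) (j : Fin n) : Finset (Fin n) :=
  Finset.univ.filter fun k' => meetPair (q := q) (a := a) σ F c j k'

lemma Pset_nonempty {σ : Equiv.Perm (Fin n)} {F : Fin n → Finset ℕ} {c : ℕ}
    (h : MeetAt (q := q) (a := a) σ F c) : (Pset (q := q) (a := a) σ F c).Nonempty := by
  obtain ⟨k, k', hm⟩ := h
  exact ⟨k, Finset.mem_filter.2 ⟨Finset.mem_univ _, ⟨k', hm⟩⟩⟩

noncomputable def cOf (σ : Equiv.Perm (Fin n)) (F : Fin n → Finset ℕ)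
    (hB : Bad (q := q) (a := a) σ F) : ℕ := Nat.find hB

noncomputable def jOf (σ : Equiv.Perm (Fin n)) (F : Fin n → Finset ℕ)
    (hB : Bad (q := q) (a := a) σ F) : Fin n :=
  (Pset (q := q) (a := a) σ F (cOf σ F hB)).min' (Pset_nonempty (Nat.find_spec hB))

lemma Qset_nonempty {σ : Equiv.Perm (Fin n)} {F : Fin n → Finset ℕ}
    (hB : Bad (q := q) (a := a) σ F) :
    (Qset (q := q) (a := a) σ F (cOf σ F hB) (jOf σ F hB)).Nonempty := by
  have := Finset.min'_mem (Pset (q := q) (a := a) σ F (cOf σ F hB))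
    (Pset_nonempty (Nat.find_spec hB))
  obtain ⟨k', hk'⟩ := (Finset.mem_filter.1 this).2
  exact ⟨k', Finset.mem_filter.2 ⟨Finset.mem_univ _, hk'⟩⟩

noncomputable def j'Of (σ : Equiv.Perm (Fin n)) (F : Fin n → Finset ℕ)
    (hB : Bad (q := q) (a := a) σ F) : Fin n :=
  (Qset (q := q) (a := a) σ F (cOf σ F hB) (jOf σ F hB)).min' (Qset_nonempty hB)

lemma meetPair_of (σ : Equiv.Perm (Fin n)) (F : Fin n → Finset ℕ)
    (hB : Bad (q := q) (a := a) σ F) :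
    meetPair (q := q) (a := a) σ F (cOf σ F hB) (jOf σ F hB) (j'Of σ F hB) := by
  have := Finset.min'_mem (Qset (q := q) (a := a) σ F (cOf σ F hB) (jOf σ F hB))
    (Qset_nonempty hB)
  exact (Finset.mem_filter.1 this).2

noncomputable def flip (σ : Equiv.Perm (Fin n)) (F : Fin n → Finset ℕ)
    (hB : Bad (q := q) (a := a) σ F) : Equiv.Perm (Fin n) × (Fin n → Finset ℕ) :=
  (σ * Equiv.swap (jOf σ F hB) (j'Of σ F hB),
    spliceF F (cOf σ F hB) (jOf σ F hB) (j'Of σ F hB))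

/-- the full involution package -/
lemma flip_flip {σ : Equiv.Perm (Fin n)} {F : Fin n → Finset ℕ}
    (hF : F ∈ Fam n q a σ) (hB : Bad (q := q) (a := a) σ F) :
    (flip σ F hB).2 ∈ Fam n q a (flip σ F hB).1 ∧
    ∃ hB' : Bad (q := q) (a := a) (flip σ F hB).1 (flip σ F hB).2,
      flip (flip σ F hB).1 (flip σ F hB).2 hB' = (σ, F) := by
  set c := cOf σ F hB with hc
  set j := jOf σ F hB with hj
  set j' := j'Of σ F hB with hj'
  have hm : meetPair (q := q) (a := a) σ F c j j' := meetPair_of σ F hB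
  have hjj : j ≠ j' := hm.1
  obtain ⟨hmem', htrans⟩ := transfer hF hm
  set σ' := σ * Equiv.swap j j' with hσ'
  set F' := spliceF F c j j' with hF'
  have hMeets' : MeetAt (q := q) (a := a) σ' F' c := ⟨j, j', (htrans c (le_refl c) j j').1 hm⟩
  have hB' : Bad (q := q) (a := a) σ' F' := ⟨c, hMeets'⟩
  refine ⟨hmem', hB', ?_⟩
  -- the new minimal diagonal is again `c`
  have hcmin : ∀ d, d < c → ¬ MeetAt (q := q) (a := a) σ F d := by
    intro d hd
    exact Nat.find_min hB hd
  have hc' : cOf σ' F' hB' = c := by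
    rw [cOf]
    apply (Nat.find_eq_iff _).2
    refine ⟨hMeets', ?_⟩
    intro d hd hMd
    obtain ⟨k, k', hk⟩ := hMd
    exact hcmin d hd ⟨k, k', (htrans d (le_of_lt hd) k k').2 hk⟩
  have hPeq : Pset (q := q) (a := a) σ' F' c = Pset (q := q) (a := a) σ F c := by
    ext k
    unfold Pset
    simp only [Finset.mem_filter, Finset.mem_univ, true_and]
    constructor
    · rintro ⟨k', hk⟩; exact ⟨k', (htrans c (le_refl c) k k').2 hk⟩
    · rintro ⟨k', hk⟩; exact ⟨k', (htrans c (le_refl c) k k').1 hk⟩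
  have hPeq2 : Pset (q := q) (a := a) σ' F' (cOf σ' F' hB') =
      Pset (q := q) (a := a) σ F (cOf σ F hB) := by
    rw [hc']; exact hPeq
  have hj'' : jOf σ' F' hB' = j := by
    rw [hj]
    unfold jOf
    exact min'_congr hPeq2 _ _
  have hQeq : Qset (q := q) (a := a) σ' F' c j = Qset (q := q) (a := a) σ F c j := by
    ext k'
    unfold Qset
    simp only [Finset.mem_filter, Finset.mem_univ, true_and]
    exact ⟨fun hk => (htrans c (le_refl c) j k').2 hk, fun hk => (htrans c (le_refl c) j k').1 hk⟩
  have hQeq2 : Qset (q := q) (a := a) σ' F' (cOf σ' F' hB') (jOf σ' F' hB') =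
      Qset (q := q) (a := a) σ F (cOf σ F hB) (jOf σ F hB) := by
    rw [hc', hj'']
    rw [hj] at hQeq
    convert hQeq using 2
  have hj''' : j'Of σ' F' hB' = j' := by
    rw [hj']
    unfold j'Of
    exact min'_congr hQeq2 _ _
  -- now compute the double flip
  show flip σ' F' hB' = (σ, F)
  rw [flip]
  rw [hc', hj'', hj''']
  have e1 : σ' * Equiv.swap j j' = σ := by
    rw [hσ', mul_assoc, Equiv.swap_mul_self, mul_one]
  have e2 : spliceF F' c j j' = F := by
    rw [hF']; exact spliceF_spliceF hjj
  rw [e1, e2]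
end Chunk4

section Chunk5
variable {n q : ℕ} {a : Fin n → ℕ}

instance {σ : Equiv.Perm (Fin n)} {F : Fin n → Finset ℕ} :
    Decidable (Bad (q := q) (a := a) σ F) := by
  apply decidable_of_iff
    (∃ c ∈ Finset.range (q + (∑ i, a i) + 1), MeetAt (q := q) (a := a) σ F c)
  constructor
  · rintro ⟨c, _, h⟩
    exact ⟨c, h⟩
  · rintro ⟨c, h⟩
    refine ⟨c, Finset.mem_range.2 ?_, h⟩
    obtain ⟨j, j', hm⟩ := h
    have h1 : c ≤ c1 n q a (σ j) := hm.2.1.2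
    have h2 : a (σ j) ≤ ∑ i, a i :=
      Finset.single_le_sum (fun i _ => Nat.zero_le (a i)) (Finset.mem_univ _)
    have h3 : c1 n q a (σ j) = a (σ j) + (q - ((σ j : ℕ) + 1)) := rfl
    omega

lemma det_eq_good (hq : n ≤ q) (ha : StrictMono a) (ha1 : ∀ i : Fin n, (i : ℕ) + 1 ≤ a i) :
    Matrix.det (Matrix.of fun i j : Fin n => ((pathSet n q a j i).card : ℚ)) =
      (((Fam n q a 1).filter
        (fun F => ¬ Bad (q := q) (a := a) (1 : Equiv.Perm (Fin n)) F)).card : ℚ) := by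
  classical
  rw [Matrix.det_apply']
  have e1 : ∀ σ : Equiv.Perm (Fin n),
      (∏ i, (Matrix.of fun i j : Fin n => ((pathSet n q a j i).card : ℚ)) (σ i) i) =
        ((Fam n q a σ).card : ℚ) := by
    intro σ
    have : (Fam n q a σ).card = ∏ i, (pathSet n q a i (σ i)).card :=
      Fintype.card_piFinset _
    rw [this]
    push_cast
    rfl
  have e2 : ∀ σ : Equiv.Perm (Fin n),
      (((Equiv.Perm.sign σ : ℤ) : ℚ) * ∏ i, (Matrix.of fun i j : Fin n =>
        ((pathSet n q a j i).card : ℚ)) (σ i) i) =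
      ∑ F ∈ Fam n q a σ, ((Equiv.Perm.sign σ : ℤ) : ℚ) := by
    intro σ
    rw [e1, Finset.sum_const, nsmul_eq_mul]
    ring
  rw [Finset.sum_congr rfl (fun σ _ => e2 σ)]
  rw [← Finset.sum_sigma (Finset.univ : Finset (Equiv.Perm (Fin n))) (fun σ => Fam n q a σ)
    (fun x => ((Equiv.Perm.sign x.1 : ℤ) : ℚ))]
  set T := (Finset.univ : Finset (Equiv.Perm (Fin n))).sigma (fun σ => Fam n q a σ) with hT
  rw [← Finset.sum_filter_add_sum_filter_not T (fun x => Bad (q := q) (a := a) x.1 x.2)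
    (fun x => ((Equiv.Perm.sign x.1 : ℤ) : ℚ))]
  have badzero : (∑ x ∈ T.filter (fun x => Bad (q := q) (a := a) x.1 x.2),
      ((Equiv.Perm.sign x.1 : ℤ) : ℚ)) = 0 := by
    set S := T.filter (fun x => Bad (q := q) (a := a) x.1 x.2) with hS
    have hmemS : ∀ x ∈ S, x.2 ∈ Fam n q a x.1 ∧ Bad (q := q) (a := a) x.1 x.2 := by
      intro x hx
      exact ⟨(Finset.mem_sigma.1 (Finset.mem_filter.1 hx).1).2, (Finset.mem_filter.1 hx).2⟩
    refine Finset.sum_involution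
      (g := fun x hx => ⟨(flip x.1 x.2 ((hmemS x hx).2)).1, (flip x.1 x.2 ((hmemS x hx).2)).2⟩)
      ?_ ?_ ?_ ?_
    · intro x hx
      have hB := (hmemS x hx).2
      have hm := meetPair_of x.1 x.2 hB
      show ((Equiv.Perm.sign x.1 : ℤ) : ℚ) +
        ((Equiv.Perm.sign (x.1 * Equiv.swap (jOf x.1 x.2 hB) (j'Of x.1 x.2 hB)) : ℤ) : ℚ) = 0
      rw [Equiv.Perm.sign_mul, Equiv.Perm.sign_swap hm.1]
      push_cast
      ring
    · intro x hx _
      have hB := (hmemS x hx).2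
      have hm := meetPair_of x.1 x.2 hB
      intro heq
      have h1 : x.1 * Equiv.swap (jOf x.1 x.2 hB) (j'Of x.1 x.2 hB) = x.1 :=
        congrArg Sigma.fst heq
      have h2 : Equiv.swap (jOf x.1 x.2 hB) (j'Of x.1 x.2 hB) = 1 := by
        have := congrArg (fun τ => x.1⁻¹ * τ) h1
        simpa [← mul_assoc] using this
      exact hm.1 (Equiv.swap_eq_one_iff.1 h2)
    · intro x hx
      have hB := (hmemS x hx).2
      have hFx := (hmemS x hx).1
      obtain ⟨hmem', hB', _⟩ := flip_flip hFx hB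
      exact Finset.mem_filter.2
        ⟨Finset.mem_sigma.2 ⟨Finset.mem_univ _, hmem'⟩, hB'⟩
    · intro x hx
      have hB := (hmemS x hx).2
      have hFx := (hmemS x hx).1
      obtain ⟨hmem', hB', heq⟩ := flip_flip hFx hB
      show (⟨(flip (flip x.1 x.2 hB).1 (flip x.1 x.2 hB).2 hB').1,
            (flip (flip x.1 x.2 hB).1 (flip x.1 x.2 hB).2 hB').2⟩ :
          (_ : Equiv.Perm (Fin n)) × (Fin n → Finset ℕ)) = x
      rw [heq]
  rw [badzero, zero_add]
  -- the good part
  have goodone : ∀ x ∈ T.filter (fun x => ¬ Bad (q := q) (a := a) x.1 x.2),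
      ((Equiv.Perm.sign x.1 : ℤ) : ℚ) = 1 := by
    intro x hx
    have hmem := (Finset.mem_filter.1 hx).1
    have hnB := (Finset.mem_filter.1 hx).2
    have hFx : x.2 ∈ Fam n q a x.1 := (Finset.mem_sigma.1 hmem).2
    have hone : x.1 = 1 := by
      by_contra hne
      exact hnB (bad_of_ne_one hq ha ha1 hne hFx)
    rw [hone]
    simp
  rw [Finset.sum_congr rfl goodone, Finset.sum_const, nsmul_eq_mul, mul_one]
  congr 1
  apply Finset.card_bij' (fun x _ => x.2) (fun F _ => (⟨1, F⟩ :
    (_ : Equiv.Perm (Fin n)) × (Fin n → Finset ℕ)))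
  · intro x hx
    have hmem := (Finset.mem_filter.1 hx).1
    have hnB := (Finset.mem_filter.1 hx).2
    have hFx : x.2 ∈ Fam n q a x.1 := (Finset.mem_sigma.1 hmem).2
    have hone : x.1 = 1 := by
      by_contra hne
      exact hnB (bad_of_ne_one hq ha ha1 hne hFx)
    refine Finset.mem_filter.2 ⟨?_, ?_⟩
    · rw [← hone]; exact hFx
    · rw [← hone]; exact hnB
  · intro F hF
    refine Finset.mem_filter.2 ⟨Finset.mem_sigma.2 ⟨Finset.mem_univ _, ?_⟩, ?_⟩
    · exact (Finset.mem_filter.1 hF).1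
    · exact (Finset.mem_filter.1 hF).2
  · intro x hx
    have hmem := (Finset.mem_filter.1 hx).1
    have hnB := (Finset.mem_filter.1 hx).2
    have hFx : x.2 ∈ Fam n q a x.1 := (Finset.mem_sigma.1 hmem).2
    have hone : x.1 = 1 := by
      by_contra hne
      exact hnB (bad_of_ne_one hq ha ha1 hne hFx)
    ext
    · rw [hone]
    · rfl
  · intro F hF
    rfl
end Chunk5

section Chunk6a

/-- `k`-th smallest element of a finset of naturals (0 if out of range). -/
def nth (S : Finset ℕ) (k : ℕ) : ℕ :=
  if h : k < S.card then S.orderEmbOfFin rfl ⟨k, h⟩ else 0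

lemma nth_eq_orderEmbOfFin {S : Finset ℕ} {L : ℕ} (h : S.card = L) {k : ℕ} (hk : k < L) :
    nth S k = S.orderEmbOfFin h ⟨k, hk⟩ := by
  unfold nth
  rw [dif_pos (show k < S.card by omega)]
  exact Finset.orderEmbOfFin_eq_orderEmbOfFin_iff.2 rfl

lemma nth_mem {S : Finset ℕ} {k : ℕ} (hk : k < S.card) : nth S k ∈ S := by
  rw [nth_eq_orderEmbOfFin rfl hk]
  exact Finset.orderEmbOfFin_mem _ _ _

lemma nth_lt_nth {S : Finset ℕ} {k k' : ℕ} (hlt : k < k') (hk' : k' < S.card) :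
    nth S k < nth S k' := by
  rw [nth_eq_orderEmbOfFin rfl hk', nth_eq_orderEmbOfFin rfl (lt_trans hlt hk')]
  exact (S.orderEmbOfFin rfl).strictMono (by simp [Fin.mk_lt_mk]; omega)

lemma nth_le_nth {S : Finset ℕ} {k k' : ℕ} (hle : k ≤ k') (hk' : k' < S.card) :
    nth S k ≤ nth S k' := by
  rcases eq_or_lt_of_le hle with rfl | h
  · exact le_refl _
  · exact le_of_lt (nth_lt_nth h hk')

lemma image_nth {S : Finset ℕ} {L : ℕ} (h : S.card = L) :
    Finset.image (fun k : Fin L => nth S k) Finset.univ = S := by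
  ext x
  simp only [Finset.mem_image, Finset.mem_univ, true_and]
  constructor
  · rintro ⟨k, rfl⟩
    exact nth_mem (by omega)
  · intro hx
    have : x ∈ Set.range (S.orderEmbOfFin h) := by
      rw [Finset.range_orderEmbOfFin]; exact hx
    obtain ⟨k, hk⟩ := this
    exact ⟨k, by rw [nth_eq_orderEmbOfFin h k.2]; exact hk⟩

lemma nth_inj {S : Finset ℕ} {L : ℕ} (h : S.card = L) :
    Function.Injective (fun k : Fin L => nth S k) := by
  intro k k' hkk
  simp only at hkk
  rw [nth_eq_orderEmbOfFin h k.2, nth_eq_orderEmbOfFin h k'.2] at hkk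
  exact (S.orderEmbOfFin h).injective hkk

lemma card_filter_nth {S : Finset ℕ} {L : ℕ} (h : S.card = L) (p : ℕ → Prop) [DecidablePred p] :
    (S.filter p).card = (Finset.univ.filter (fun k : Fin L => p (nth S k))).card := by
  conv_lhs => rw [← image_nth h]
  rw [Finset.filter_image, Finset.card_image_of_injective _ (nth_inj h)]

lemma nth_image {L : ℕ} (g : Fin L → ℕ) (hg : StrictMono g) (k : ℕ) (hk : k < L) :
    nth (Finset.image g Finset.univ) k = g ⟨k, hk⟩ := by
  have hcard : (Finset.image g Finset.univ).card = L := by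
    rw [Finset.card_image_of_injective _ hg.injective, Finset.card_univ, Fintype.card_fin]
  have huniq := Finset.orderEmbOfFin_unique hcard
    (f := g) (fun x => Finset.mem_image_of_mem _ (Finset.mem_univ x)) hg
  rw [nth_eq_orderEmbOfFin hcard hk, ← huniq]

lemma nth_count_le {S : Finset ℕ} {k : ℕ} (hk : k < S.card) :
    (S.filter (· ≤ nth S k)).card = k + 1 := by
  rw [card_filter_nth rfl]
  have : (Finset.univ.filter (fun k' : Fin S.card => nth S k' ≤ nth S k)) =
      Finset.Iic (⟨k, hk⟩ : Fin S.card) := by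
    ext k'
    simp only [Finset.mem_filter, Finset.mem_univ, true_and, Finset.mem_Iic]
    constructor
    · intro hle
      rw [Fin.le_def]
      by_contra hgt
      push_neg at hgt
      have hlt := nth_lt_nth (show k < (k' : ℕ) from hgt) k'.2
      omega
    · intro hle
      rw [Fin.le_def] at hle
      exact nth_le_nth (show (k' : ℕ) ≤ k from hle) hk
  rw [this, Fin.card_Iic]

lemma nth_count_lt_le {S : Finset ℕ} {k c : ℕ} (hk : k < S.card) (hc : c ≤ nth S k) :
    (S.filter (· < c)).card ≤ k := by
  rw [card_filter_nth rfl]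
  have hsub : (Finset.univ.filter (fun k' : Fin S.card => nth S k' < c)) ⊆
      Finset.Iio (⟨k, hk⟩ : Fin S.card) := by
    intro k' hk'
    have h1 := (Finset.mem_filter.1 hk').2
    simp only [Finset.mem_Iio]
    rw [Fin.lt_def]
    by_contra hge
    push_neg at hge
    have := nth_le_nth (show k ≤ (k' : ℕ) from hge) k'.2
    omega
  calc _ ≤ (Finset.Iio (⟨k, hk⟩ : Fin S.card)).card := Finset.card_le_card hsub
    _ = k := Fin.card_Iio _

end Chunk6a

section Chunk6b
variable {n q : ℕ} {a : Fin n → ℕ}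

lemma gap (ha : StrictMono a) :
    ∀ (w : ℕ) (hw : w < n) (v : ℕ) (hv : v < n), v ≤ w → a ⟨v, hv⟩ + (w - v) ≤ a ⟨w, hw⟩ := by
  intro w
  induction w with
  | zero =>
    intro hw v hv hvw
    have : v = 0 := by omega
    subst this
    simp
  | succ w ih =>
    intro hw v hv hvw
    by_cases h : v = w + 1
    · subst h; simp
    · have hw' : w < n := by omega
      have h1 := ih hw' v hv (by omega)
      have h2 : a ⟨w, hw'⟩ < a ⟨w + 1, hw⟩ := ha (by simp [Fin.mk_lt_mk])
      omega

lemma gap' (ha : StrictMono a) {i i' : Fin n} (h : (i : ℕ) ≤ (i' : ℕ)) :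
    a i + ((i' : ℕ) - (i : ℕ)) ≤ a i' := by
  have := gap ha (i' : ℕ) i'.2 (i : ℕ) i.2 h
  simpa using this

lemma L_mono (ha : StrictMono a) {i i' : Fin n} (h : (i : ℕ) ≤ (i' : ℕ)) :
    a i - ((i : ℕ) + 1) ≤ a i' - ((i' : ℕ) + 1) := by
  have := gap' ha h
  omega

lemma c1_mono (ha : StrictMono a) (hq : n ≤ q) {i i' : Fin n} (h : (i : ℕ) ≤ (i' : ℕ)) :
    c1 n q a i ≤ c1 n q a i' := by
  have h1 := gap' ha h
  have h2 : (i : ℕ) + 1 ≤ q := le_trans i.2 hq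
  have h3 : (i' : ℕ) + 1 ≤ q := le_trans i'.2 hq
  unfold c1
  omega

lemma nth_lower {S : Finset ℕ} {c0 D : ℕ} (hS : S ⊆ Finset.Ico c0 D) :
    ∀ k, k < S.card → c0 + k ≤ nth S k := by
  intro k
  induction k with
  | zero =>
    intro hk
    have := (Finset.mem_Ico.1 (hS (nth_mem hk))).1
    omega
  | succ k ih =>
    intro hk
    have h1 := ih (by omega)
    have h2 := nth_lt_nth (show k < k + 1 by omega) hk
    omega

lemma nth_add_le {S : Finset ℕ} : ∀ (j k : ℕ), k + j < S.card → nth S k + j ≤ nth S (k + j) := by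
  intro j
  induction j with
  | zero => intro k hk; simp
  | succ j ih =>
    intro k hk
    have h1 := ih k (by omega)
    have h2 := nth_lt_nth (show k + j < k + (j + 1) by omega) (by omega : k + (j+1) < S.card)
    have : k + j + 1 = k + (j + 1) := by omega
    omega

lemma nth_upper {S : Finset ℕ} {c0 D k : ℕ} (hS : S ⊆ Finset.Ico c0 D) (hk : k < S.card) :
    nth S k + S.card ≤ D + k := by
  have h1 := nth_add_le (S := S) (S.card - 1 - k) k (by omega)
  have h2 : k + (S.card - 1 - k) = S.card - 1 := by omega
  rw [h2] at h1
  have h3 : nth S (S.card - 1) < D := (Finset.mem_Ico.1 (hS (nth_mem (by omega)))).2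
  omega

lemma not_mem_cells {x y : ℕ} (hx : n ≤ x) : (x, y) ∉ cellsOf n a := by
  unfold cellsOf
  intro h
  have := (Finset.mem_product.1 (Finset.mem_filter.1 h).1).1
  rw [Finset.mem_range] at this
  omega

lemma mem_cells_iff (h2 : ∀ i : Fin n, a i ≤ 2 * (i : ℕ) + 1) {x y : ℕ} (hx : x < n) :
    ((x, y) ∈ cellsOf n a) ↔ y < a ⟨n - 1 - x, by omega⟩ - (n - x) := by
  unfold cellsOf extSeq
  rw [Finset.mem_filter, Finset.mem_product]
  simp only [Finset.mem_range]
  constructor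
  · rintro ⟨⟨_, _⟩, hlt⟩
    rw [dif_pos (show n - 1 - x < n by omega)] at hlt
    exact hlt
  · intro hlt
    have hbound := h2 ⟨n - 1 - x, by omega⟩
    simp only at hbound
    refine ⟨⟨hx, ?_⟩, ?_⟩
    · omega
    · rw [dif_pos (show n - 1 - x < n by omega)]
      exact hlt

lemma cell_i (h2 : ∀ i : Fin n, a i ≤ 2 * (i : ℕ) + 1) (i : Fin n) (k : ℕ) :
    ((n - 1 - (i : ℕ), k) ∈ cellsOf n a) ↔ k < a i - ((i : ℕ) + 1) := by
  have hx : n - 1 - (i : ℕ) < n := by have := i.2; omega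
  rw [mem_cells_iff h2 hx]
  have hi : (⟨n - 1 - (n - 1 - (i : ℕ)), by omega⟩ : Fin n) = i := by
    apply Fin.ext
    simp only
    have := i.2
    omega
  rw [hi]
  have : n - (n - 1 - (i : ℕ)) = (i : ℕ) + 1 := by have := i.2; omega
  rw [this]
end Chunk6b

section Chunk6c
variable {n q : ℕ} {a : Fin n → ℕ} {F : Fin n → Finset ℕ}

lemma nth_out {S : Finset ℕ} {k : ℕ} (hk : S.card ≤ k) : nth S k = 0 := by
  unfold nth
  rw [dif_neg (by omega)]

lemma famF (hF : F ∈ Fam n q a 1) (i : Fin n) :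
    F i ⊆ Finset.Ico ((i : ℕ) + 1) (c1 n q a i) ∧ (F i).card = a i - ((i : ℕ) + 1) := by
  have h := mem_Fam.1 hF i
  have h1 : (1 : Equiv.Perm (Fin n)) i = i := rfl
  rw [h1] at h
  rw [mem_pathSet] at h
  exact ⟨h.2.1, h.2.2⟩

lemma noMeet (hnB : ¬ Bad (q := q) (a := a) (1 : Equiv.Perm (Fin n)) F) :
    ∀ (c : ℕ) (j j' : Fin n), j ≠ j' →
      Dom (q := q) (a := a) j j c → Dom (q := q) (a := a) j' j' c →
      phi ((j : ℕ) + 1) (F j) c ≠ phi ((j' : ℕ) + 1) (F j') c := by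
  intro c j j' hne hd hd' heq
  exact hnB ⟨c, j, j', hne, hd, hd', heq⟩

/-- consecutive paths are strictly separated on shared domain -/
lemma phi_strict_consec (hq : n ≤ q) (ha : StrictMono a)
    (ha1 : ∀ i : Fin n, (i : ℕ) + 1 ≤ a i)
    (hF : F ∈ Fam n q a 1) (hnB : ¬ Bad (q := q) (a := a) (1 : Equiv.Perm (Fin n)) F)
    {i i' : Fin n} (hii : (i : ℕ) + 1 = (i' : ℕ)) :
    ∀ c, (i' : ℕ) + 1 ≤ c → c ≤ c1 n q a i →
      phi ((i : ℕ) + 1) (F i) c < phi ((i' : ℕ) + 1) (F i') c := by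
  have hsub := (famF hF i).1
  have hsub' := (famF hF i').1
  have hne : i ≠ i' := by intro h; rw [h] at hii; omega
  have hc1 : c1 n q a i ≤ c1 n q a i' := c1_mono ha hq (by omega)
  intro c
  refine Nat.le_induction ?_ ?_ c
  · -- base case c = i' + 1
    intro hcc
    have e1 : phi ((i' : ℕ) + 1) (F i') ((i' : ℕ) + 1) = (i' : ℕ) + 1 :=
      phi_start hsub' (le_refl _)
    have e2 : phi ((i : ℕ) + 1) (F i) ((i : ℕ) + 1) = (i : ℕ) + 1 :=
      phi_start hsub (le_refl _)
    have e3 := phi_le_add ((i : ℕ) + 1) (F i) (show (i : ℕ) + 1 ≤ (i' : ℕ) + 1 by omega)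
    have e4 := noMeet hnB ((i' : ℕ) + 1) i i' hne
      ⟨by omega, by omega⟩ ⟨le_refl _, by omega⟩
    omega
  · -- induction step
    intro c hc IH hcc
    have h1 := IH (by omega)
    have h2 := phi_succ_le ((i : ℕ) + 1) (F i) c
    have h3 := phi_mono ((i' : ℕ) + 1) (F i') (show c ≤ c + 1 by omega)
    have h4 := noMeet hnB (c + 1) i i' hne
      ⟨by omega, by omega⟩ ⟨by omega, by omega⟩
    omega

/-- consecutive columns: higher path has (weakly) smaller increment positions -/
lemma nth_consec (hq : n ≤ q) (ha : StrictMono a)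
    (ha1 : ∀ i : Fin n, (i : ℕ) + 1 ≤ a i)
    (hF : F ∈ Fam n q a 1) (hnB : ¬ Bad (q := q) (a := a) (1 : Equiv.Perm (Fin n)) F)
    {i i' : Fin n} (hii : (i : ℕ) + 1 = (i' : ℕ)) {k : ℕ} (hk : k < a i - ((i : ℕ) + 1)) :
    nth (F i') k ≤ nth (F i) k := by
  obtain ⟨hsub, hcard⟩ := famF hF i
  obtain ⟨hsub', hcard'⟩ := famF hF i'
  by_contra hgt
  push_neg at hgt
  have hki : k < (F i).card := by omega
  have hki' : k < (F i').card := by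
    have := L_mono ha (show (i : ℕ) ≤ (i' : ℕ) by omega)
    omega
  set c' := nth (F i) k with hc'
  have hcIco := Finset.mem_Ico.1 (hsub (nth_mem hki))
  have e0 : (F i).filter (· < c' + 1) = (F i).filter (· ≤ c') := by
    ext x
    simp only [Finset.mem_filter]
    constructor
    · rintro ⟨u1, u2⟩; exact ⟨u1, by omega⟩
    · rintro ⟨u1, u2⟩; exact ⟨u1, by omega⟩
  have e1 : ((F i).filter (· < c' + 1)).card = k + 1 := by
    rw [e0]; exact nth_count_le hki
  have e2 : ((F i').filter (· < c' + 1)).card ≤ k :=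
    nth_count_lt_le hki' (by omega)
  have e3 := phi_strict_consec hq ha ha1 hF hnB hii (c' + 1)
    (by omega) (by omega)
  unfold phi at e3
  omega

lemma nth_chain (hq : n ≤ q) (ha : StrictMono a)
    (ha1 : ∀ i : Fin n, (i : ℕ) + 1 ≤ a i)
    (hF : F ∈ Fam n q a 1) (hnB : ¬ Bad (q := q) (a := a) (1 : Equiv.Perm (Fin n)) F) :
    ∀ (d : ℕ) (i : Fin n) (hd : (i : ℕ) + d < n) {k : ℕ} (hk : k < a i - ((i : ℕ) + 1)),
      nth (F ⟨(i : ℕ) + d, hd⟩) k ≤ nth (F i) k := by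
  intro d
  induction d with
  | zero =>
    intro i hd k hk
    have : (⟨(i : ℕ) + 0, hd⟩ : Fin n) = i := by apply Fin.ext; simp
    rw [this]
  | succ d ih =>
    intro i hd k hk
    have hd' : (i : ℕ) + d < n := by omega
    have h1 := ih i hd' hk
    set imid : Fin n := ⟨(i : ℕ) + d, hd'⟩ with him
    have hkmid : k < a imid - ((imid : ℕ) + 1) := by
      have := L_mono ha (show (i : ℕ) ≤ (imid : ℕ) by simp [him])
      omega
    have h2 := nth_consec hq ha ha1 hF hnB
      (i := imid) (i' := ⟨(i : ℕ) + (d + 1), hd⟩) (by simp [him]; omega) hkmid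
    omega

lemma nth_low (hq : n ≤ q) (ha : StrictMono a)
    (ha1 : ∀ i : Fin n, (i : ℕ) + 1 ≤ a i)
    (hF : F ∈ Fam n q a 1) (hnB : ¬ Bad (q := q) (a := a) (1 : Equiv.Perm (Fin n)) F)
    (i : Fin n) {k : ℕ} (hk : k < a i - ((i : ℕ) + 1)) :
    n + k ≤ nth (F i) k := by
  have hn : 0 < n := by have := i.2; omega
  have hd : (i : ℕ) + (n - 1 - (i : ℕ)) < n := by have := i.2; omega
  have hi2 := i.2
  set itop : Fin n := ⟨(i : ℕ) + (n - 1 - (i : ℕ)), hd⟩ with hit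
  have h1 := nth_chain hq ha ha1 hF hnB (n - 1 - (i : ℕ)) i hd hk
  rw [← hit] at h1
  obtain ⟨hsubt, hcardt⟩ := famF hF itop
  have hkt : k < (F itop).card := by
    have := L_mono ha (show (i : ℕ) ≤ (itop : ℕ) by simp [hit])
    omega
  have h2 := nth_lower hsubt k hkt
  have h3 : (itop : ℕ) = n - 1 := by simp [hit]; omega
  omega

lemma nth_up (hq : n ≤ q)
    (hF : F ∈ Fam n q a 1)
    (i : Fin n) {k : ℕ} (hk : k < a i - ((i : ℕ) + 1)) :
    nth (F i) k ≤ q + k := by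
  obtain ⟨hsub, hcard⟩ := famF hF i
  have h1 := nth_upper hsub (show k < (F i).card by omega)
  have h2 : (i : ℕ) + 1 ≤ q := le_trans i.2 hq
  have h3 : c1 n q a i = a i + (q - ((i : ℕ) + 1)) := rfl
  omega

end Chunk6c

section Chunk6d
variable {n q : ℕ} {a : Fin n → ℕ} {F : Fin n → Finset ℕ} {f : ℕ × ℕ → ℕ}

/-- the filling associated to a path family -/
def fOf (n : ℕ) (F : Fin n → Finset ℕ) : ℕ × ℕ → ℕ :=
  fun u => if h : u.1 < n then nth (F ⟨n - 1 - u.1, by omega⟩) u.2 - n - u.2 else 0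

lemma fOf_eval {x y : ℕ} (hx : x < n) :
    fOf n F (x, y) = nth (F ⟨n - 1 - x, by omega⟩) y - n - y := dif_pos hx

lemma fOf_cond1 (h2 : ∀ i : Fin n, a i ≤ 2 * (i : ℕ) + 1) (hF : F ∈ Fam n q a 1) :
    ∀ u, u ∉ cellsOf n a → fOf n F u = 0 := by
  rintro ⟨x, y⟩ hu
  by_cases hx : x < n
  · rw [fOf_eval hx]
    have hnot : ¬ y < a ⟨n - 1 - x, by omega⟩ - (n - x) := fun hc =>
      hu ((mem_cells_iff h2 hx).2 hc)
    have hcard := (famF hF ⟨n - 1 - x, by omega⟩).2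
    have hv : ((⟨n - 1 - x, by omega⟩ : Fin n) : ℕ) = n - 1 - x := rfl
    have : nth (F ⟨n - 1 - x, by omega⟩) y = 0 := by
      apply nth_out
      rw [hcard, hv]
      omega
    rw [this]
    omega
  · exact dif_neg hx

lemma cell_x_lt {x y : ℕ} (hu : (x, y) ∈ cellsOf n a) : x < n := by
  by_contra hc
  exact not_mem_cells (le_of_not_gt hc) hu

lemma cell_y_lt (h2 : ∀ i : Fin n, a i ≤ 2 * (i : ℕ) + 1) {x y : ℕ} (hx : x < n)
    (hu : (x, y) ∈ cellsOf n a) :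
    y < a (⟨n - 1 - x, by omega⟩ : Fin n) - (((⟨n - 1 - x, by omega⟩ : Fin n) : ℕ) + 1) := by
  have h1 := (mem_cells_iff h2 hx).1 hu
  have hv : ((⟨n - 1 - x, by omega⟩ : Fin n) : ℕ) = n - 1 - x := rfl
  rw [hv]
  omega

lemma fOf_cond2 (hq : n ≤ q) (ha : StrictMono a) (ha1 : ∀ i : Fin n, (i : ℕ) + 1 ≤ a i)
    (h2 : ∀ i : Fin n, a i ≤ 2 * (i : ℕ) + 1) (hF : F ∈ Fam n q a 1) :
    ∀ u ∈ cellsOf n a, fOf n F u ≤ q - n := by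
  rintro ⟨x, y⟩ hu
  have hx := cell_x_lt hu
  have hy := cell_y_lt h2 hx hu
  rw [fOf_eval hx]
  have hup := nth_up hq hF (⟨n - 1 - x, by omega⟩ : Fin n) hy
  omega

lemma fOf_cond3 (hq : n ≤ q) (ha : StrictMono a) (ha1 : ∀ i : Fin n, (i : ℕ) + 1 ≤ a i)
    (h2 : ∀ i : Fin n, a i ≤ 2 * (i : ℕ) + 1) (hF : F ∈ Fam n q a 1)
    (hnB : ¬ Bad (q := q) (a := a) (1 : Equiv.Perm (Fin n)) F) :
    ∀ x y, (x, y) ∈ cellsOf n a → (x, y + 1) ∈ cellsOf n a →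
      fOf n F (x, y) ≤ fOf n F (x, y + 1) := by
  intro x y hu1 hu2
  have hx := cell_x_lt hu1
  have hy1 := cell_y_lt h2 hx hu2
  have hcard := (famF hF (⟨n - 1 - x, by omega⟩ : Fin n)).2
  have hlow := nth_low hq ha ha1 hF hnB (⟨n - 1 - x, by omega⟩ : Fin n)
    (k := y) (by omega)
  have hlt := nth_lt_nth (show y < y + 1 by omega)
    (show y + 1 < (F (⟨n - 1 - x, by omega⟩ : Fin n)).card by omega)
  rw [fOf_eval hx, fOf_eval hx]
  omega

lemma fOf_cond4 (hq : n ≤ q) (ha : StrictMono a) (ha1 : ∀ i : Fin n, (i : ℕ) + 1 ≤ a i)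
    (h2 : ∀ i : Fin n, a i ≤ 2 * (i : ℕ) + 1) (hF : F ∈ Fam n q a 1)
    (hnB : ¬ Bad (q := q) (a := a) (1 : Equiv.Perm (Fin n)) F) :
    ∀ x y, (x, y) ∈ cellsOf n a → (x + 1, y) ∈ cellsOf n a →
      fOf n F (x, y) ≤ fOf n F (x + 1, y) := by
  intro x y hu1 hu2
  have hx1 := cell_x_lt hu2
  have hx : x < n := by omega
  have hyl := cell_y_lt h2 hx1 hu2
  have hii : ((⟨n - 1 - (x + 1), by omega⟩ : Fin n) : ℕ) + 1 =
      ((⟨n - 1 - x, by omega⟩ : Fin n) : ℕ) := by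
    simp only []
    omega
  have key := nth_consec hq ha ha1 hF hnB
    (i := ⟨n - 1 - (x + 1), by omega⟩) (i' := ⟨n - 1 - x, by omega⟩) hii (k := y) (by
      have hv : ((⟨n - 1 - (x + 1), by omega⟩ : Fin n) : ℕ) = n - 1 - (x + 1) := rfl
      omega)
  rw [fOf_eval hx, fOf_eval hx1]
  omega

/-- the path family associated to a filling -/
def Ffun (n : ℕ) (a : Fin n → ℕ) (f : ℕ × ℕ → ℕ) : Fin n → Finset ℕ :=
  fun i => Finset.image
    (fun k : Fin (a i - ((i : ℕ) + 1)) => f (n - 1 - (i : ℕ), (k : ℕ)) + n + (k : ℕ))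
    Finset.univ

lemma frow (h2 : ∀ i : Fin n, a i ≤ 2 * (i : ℕ) + 1)
    (hf3 : ∀ x y, (x, y) ∈ cellsOf n a → (x, y + 1) ∈ cellsOf n a → f (x, y) ≤ f (x, y + 1))
    (i : Fin n) : ∀ (d k : ℕ), k + d < a i - ((i : ℕ) + 1) →
      f (n - 1 - (i : ℕ), k) ≤ f (n - 1 - (i : ℕ), k + d) := by
  intro d
  induction d with
  | zero => intro k _; simp
  | succ d ih =>
    intro k hk
    have h1 := ih k (by omega)
    have h2' := hf3 (n - 1 - (i : ℕ)) (k + d) ((cell_i h2 i (k + d)).2 (by omega))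
      ((cell_i h2 i (k + d + 1)).2 (by omega))
    have : k + (d + 1) = k + d + 1 := by omega
    rw [this]
    omega

lemma g_strict (h2 : ∀ i : Fin n, a i ≤ 2 * (i : ℕ) + 1)
    (hf3 : ∀ x y, (x, y) ∈ cellsOf n a → (x, y + 1) ∈ cellsOf n a → f (x, y) ≤ f (x, y + 1))
    (i : Fin n) :
    StrictMono (fun k : Fin (a i - ((i : ℕ) + 1)) =>
      f (n - 1 - (i : ℕ), (k : ℕ)) + n + (k : ℕ)) := by
  intro k k' hkk
  have hkk' : (k : ℕ) < (k' : ℕ) := hkk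
  have h1 := frow h2 hf3 i ((k' : ℕ) - (k : ℕ)) (k : ℕ) (by have := k'.2; omega)
  have : (k : ℕ) + ((k' : ℕ) - (k : ℕ)) = (k' : ℕ) := by omega
  rw [this] at h1
  simp only []
  omega

lemma Ffun_card (h2 : ∀ i : Fin n, a i ≤ 2 * (i : ℕ) + 1)
    (hf3 : ∀ x y, (x, y) ∈ cellsOf n a → (x, y + 1) ∈ cellsOf n a → f (x, y) ≤ f (x, y + 1))
    (i : Fin n) : (Ffun n a f i).card = a i - ((i : ℕ) + 1) := by
  unfold Ffun
  rw [Finset.card_image_of_injective _ (g_strict h2 hf3 i).injective, Finset.card_univ,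
    Fintype.card_fin]

lemma Ffun_nth (h2 : ∀ i : Fin n, a i ≤ 2 * (i : ℕ) + 1)
    (hf3 : ∀ x y, (x, y) ∈ cellsOf n a → (x, y + 1) ∈ cellsOf n a → f (x, y) ≤ f (x, y + 1))
    (i : Fin n) {k : ℕ} (hk : k < a i - ((i : ℕ) + 1)) :
    nth (Ffun n a f i) k = f (n - 1 - (i : ℕ), k) + n + k := by
  unfold Ffun
  rw [nth_image _ (g_strict h2 hf3 i) k hk]

lemma Ffun_mem (hq : n ≤ q) (ha1 : ∀ i : Fin n, (i : ℕ) + 1 ≤ a i)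
    (h2 : ∀ i : Fin n, a i ≤ 2 * (i : ℕ) + 1)
    (hf2 : ∀ u ∈ cellsOf n a, f u ≤ q - n)
    (hf3 : ∀ x y, (x, y) ∈ cellsOf n a → (x, y + 1) ∈ cellsOf n a → f (x, y) ≤ f (x, y + 1)) :
    Ffun n a f ∈ Fam n q a 1 := by
  rw [mem_Fam]
  intro i
  have h1 : (1 : Equiv.Perm (Fin n)) i = i := rfl
  rw [h1, mem_pathSet]
  refine ⟨ha1 i, ?_, Ffun_card h2 hf3 i⟩
  intro z hz
  obtain ⟨k, _, rfl⟩ := Finset.mem_image.1 hz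
  have hcell := (cell_i h2 i (k : ℕ)).2 k.2
  have hle := hf2 _ hcell
  have hiq : (i : ℕ) + 1 ≤ q := le_trans i.2 hq
  have hia := ha1 i
  have hin : (i : ℕ) < n := i.2
  have hk2 := k.2
  rw [Finset.mem_Ico]
  unfold c1
  constructor
  · omega
  · omega

lemma Ffun_cnt (ha : StrictMono a) (h2 : ∀ i : Fin n, a i ≤ 2 * (i : ℕ) + 1)
    (hf3 : ∀ x y, (x, y) ∈ cellsOf n a → (x, y + 1) ∈ cellsOf n a → f (x, y) ≤ f (x, y + 1))
    (hf4 : ∀ x y, (x, y) ∈ cellsOf n a → (x + 1, y) ∈ cellsOf n a → f (x, y) ≤ f (x + 1, y))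
    {i i' : Fin n} (hii : (i : ℕ) + 1 = (i' : ℕ)) (c : ℕ) :
    ((Ffun n a f i).filter (· < c)).card ≤ ((Ffun n a f i').filter (· < c)).card := by
  have hLL : a i - ((i : ℕ) + 1) ≤ a i' - ((i' : ℕ) + 1) := L_mono ha (by omega)
  rw [card_filter_nth (Ffun_card h2 hf3 i), card_filter_nth (Ffun_card h2 hf3 i')]
  apply Finset.card_le_card_of_injOn (fun k => Fin.castLE hLL k)
  · intro k hk
    rw [Finset.mem_coe, Finset.mem_filter] at hk ⊢
    refine ⟨Finset.mem_univ _, ?_⟩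
    have hk2 := hk.2
    rw [Ffun_nth h2 hf3 i k.2] at hk2
    rw [Ffun_nth h2 hf3 i' (show ((Fin.castLE hLL k) : ℕ) < a i' - ((i' : ℕ) + 1) by
      simp [Fin.castLE]; omega)]
    have hcast : ((Fin.castLE hLL k) : ℕ) = (k : ℕ) := rfl
    rw [hcast]
    -- use the column condition
    have hx1 : n - 1 - (i' : ℕ) + 1 = n - 1 - (i : ℕ) := by
      have := i'.2
      omega
    have hcell1 := (cell_i h2 i' (k : ℕ)).2 (by omega)
    have hcell2 := (cell_i h2 i (k : ℕ)).2 k.2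
    rw [← hx1] at hcell2
    have := hf4 (n - 1 - (i' : ℕ)) (k : ℕ) hcell1 hcell2
    rw [hx1] at this
    omega
  · intro k _ k' _ hkk
    have h := congrArg (fun z : Fin (a i' - ((i' : ℕ) + 1)) => (z : ℕ)) hkk
    simp only [Fin.coe_castLE] at h
    exact Fin.ext h

lemma Ffun_phi_consec (ha : StrictMono a) (h2 : ∀ i : Fin n, a i ≤ 2 * (i : ℕ) + 1)
    (hf3 : ∀ x y, (x, y) ∈ cellsOf n a → (x, y + 1) ∈ cellsOf n a → f (x, y) ≤ f (x, y + 1))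
    (hf4 : ∀ x y, (x, y) ∈ cellsOf n a → (x + 1, y) ∈ cellsOf n a → f (x, y) ≤ f (x + 1, y))
    {i i' : Fin n} (hii : (i : ℕ) + 1 = (i' : ℕ)) (c : ℕ) :
    phi ((i : ℕ) + 1) (Ffun n a f i) c < phi ((i' : ℕ) + 1) (Ffun n a f i') c := by
  have := Ffun_cnt ha h2 hf3 hf4 hii c
  unfold phi
  omega

lemma Ffun_chain (ha : StrictMono a) (h2 : ∀ i : Fin n, a i ≤ 2 * (i : ℕ) + 1)
    (hf3 : ∀ x y, (x, y) ∈ cellsOf n a → (x, y + 1) ∈ cellsOf n a → f (x, y) ≤ f (x, y + 1))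
    (hf4 : ∀ x y, (x, y) ∈ cellsOf n a → (x + 1, y) ∈ cellsOf n a → f (x, y) ≤ f (x + 1, y)) :
    ∀ (d : ℕ) (j : Fin n) (hd : (j : ℕ) + d + 1 < n) (c : ℕ),
      phi ((j : ℕ) + 1) (Ffun n a f j) c <
        phi (((⟨(j : ℕ) + d + 1, hd⟩ : Fin n) : ℕ) + 1) (Ffun n a f ⟨(j : ℕ) + d + 1, hd⟩) c := by
  intro d
  induction d with
  | zero =>
    intro j hd c
    exact Ffun_phi_consec ha h2 hf3 hf4 (i := j) (i' := ⟨(j : ℕ) + 0 + 1, hd⟩) (by simp) c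
  | succ d ih =>
    intro j hd c
    have hd' : (j : ℕ) + d + 1 < n := by omega
    have h1 := ih j hd' c
    have h3 := Ffun_phi_consec ha h2 hf3 hf4
      (i := ⟨(j : ℕ) + d + 1, hd'⟩) (i' := ⟨(j : ℕ) + (d + 1) + 1, hd⟩) (by simp; omega) c
    omega

lemma Ffun_noBad (ha : StrictMono a) (h2 : ∀ i : Fin n, a i ≤ 2 * (i : ℕ) + 1)
    (hf3 : ∀ x y, (x, y) ∈ cellsOf n a → (x, y + 1) ∈ cellsOf n a → f (x, y) ≤ f (x, y + 1))
    (hf4 : ∀ x y, (x, y) ∈ cellsOf n a → (x + 1, y) ∈ cellsOf n a → f (x, y) ≤ f (x + 1, y)) :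
    ¬ Bad (q := q) (a := a) (1 : Equiv.Perm (Fin n)) (Ffun n a f) := by
  rintro ⟨c, j, j', hne, _, _, heq⟩
  have hvne : (j : ℕ) ≠ (j' : ℕ) := fun h => hne (Fin.ext h)
  have key : ∀ u u' : Fin n, (u : ℕ) < (u' : ℕ) →
      phi ((u : ℕ) + 1) (Ffun n a f u) c < phi ((u' : ℕ) + 1) (Ffun n a f u') c := by
    intro u u' hlt
    have hd : (u : ℕ) + ((u' : ℕ) - (u : ℕ) - 1) + 1 < n := by have := u'.2; omega
    have := Ffun_chain ha h2 hf3 hf4 ((u' : ℕ) - (u : ℕ) - 1) u hd c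
    have hu' : (⟨(u : ℕ) + ((u' : ℕ) - (u : ℕ) - 1) + 1, hd⟩ : Fin n) = u' := by
      apply Fin.ext; simp; omega
    rwa [hu'] at this
  rcases Nat.lt_or_ge (j : ℕ) (j' : ℕ) with h | h
  · have := key j j' h; omega
  · have := key j' j (by omega); omega

end Chunk6d

section Chunk6e
variable {n q : ℕ} {a : Fin n → ℕ}

lemma good_card (hq : n ≤ q) (ha : StrictMono a) (ha1 : ∀ i : Fin n, (i : ℕ) + 1 ≤ a i)
    (h2 : ∀ i : Fin n, a i ≤ 2 * (i : ℕ) + 1) :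
    (((Fam n q a 1).filter
      (fun F => ¬ Bad (q := q) (a := a) (1 : Equiv.Perm (Fin n)) F)).card) =
    Nat.card {f : ℕ × ℕ → ℕ //
      (∀ u, u ∉ cellsOf n a → f u = 0) ∧
      (∀ u ∈ cellsOf n a, f u ≤ q - n) ∧
      (∀ x y, (x, y) ∈ cellsOf n a → (x, y + 1) ∈ cellsOf n a → f (x, y) ≤ f (x, y + 1)) ∧
      (∀ x y, (x, y) ∈ cellsOf n a → (x + 1, y) ∈ cellsOf n a → f (x, y) ≤ f (x + 1, y))} := by
  rw [← Nat.card_eq_finsetCard]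
  apply Nat.card_congr
  refine
    { toFun := fun Fg => ⟨fOf n Fg.1,
        fOf_cond1 h2 (Finset.mem_filter.1 Fg.2).1,
        fOf_cond2 hq ha ha1 h2 (Finset.mem_filter.1 Fg.2).1,
        fOf_cond3 hq ha ha1 h2 (Finset.mem_filter.1 Fg.2).1 (Finset.mem_filter.1 Fg.2).2,
        fOf_cond4 hq ha ha1 h2 (Finset.mem_filter.1 Fg.2).1 (Finset.mem_filter.1 Fg.2).2⟩
      invFun := fun fg => ⟨Ffun n a fg.1,
        Finset.mem_filter.2 ⟨Ffun_mem hq ha1 h2 fg.2.2.1 fg.2.2.2.1,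
          Ffun_noBad ha h2 fg.2.2.2.1 fg.2.2.2.2⟩⟩
      left_inv := ?_
      right_inv := ?_ }
  · -- left inverse
    rintro ⟨F, hFg⟩
    have hFm : F ∈ Fam n q a 1 := (Finset.mem_filter.1 hFg).1
    have hnB : ¬ Bad (q := q) (a := a) (1 : Equiv.Perm (Fin n)) F :=
      (Finset.mem_filter.1 hFg).2
    apply Subtype.ext
    simp only []
    funext i
    have hcard := (famF hFm i).2
    have hgeq : ∀ k : Fin (a i - ((i : ℕ) + 1)),
        fOf n F (n - 1 - (i : ℕ), (k : ℕ)) + n + (k : ℕ) = nth (F i) (k : ℕ) := by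
      intro k
      have hi2 := i.2
      have hx : n - 1 - (i : ℕ) < n := by omega
      rw [fOf_eval hx]
      have hidx : (⟨n - 1 - (n - 1 - (i : ℕ)), by omega⟩ : Fin n) = i := by
        apply Fin.ext; simp; omega
      rw [hidx]
      have hlow := nth_low hq ha ha1 hFm hnB i (k := (k : ℕ)) k.2
      omega
    show Ffun n a (fOf n F) i = F i
    unfold Ffun
    have e := Finset.image_congr
      (s := (Finset.univ : Finset (Fin (a i - ((i : ℕ) + 1)))))
      (f := fun k : Fin (a i - ((i : ℕ) + 1)) =>
        fOf n F (n - 1 - (i : ℕ), (k : ℕ)) + n + (k : ℕ))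
      (g := fun k : Fin (a i - ((i : ℕ) + 1)) => nth (F i) (k : ℕ))
      (fun k _ => hgeq k)
    rw [e]
    exact image_nth hcard
  · -- right inverse
    rintro ⟨f, hf1, hf2, hf3, hf4⟩
    apply Subtype.ext
    simp only []
    funext u
    obtain ⟨x, y⟩ := u
    by_cases hx : x < n
    · have hxn : n - 1 - x < n := by omega
      rw [show fOf n (Ffun n a f) (x, y) =
        nth (Ffun n a f ⟨n - 1 - x, hxn⟩) y - n - y from dif_pos hx]
      by_cases hy : y < a (⟨n - 1 - x, hxn⟩ : Fin n) - (((⟨n - 1 - x, hxn⟩ : Fin n) : ℕ) + 1)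
      · rw [Ffun_nth h2 hf3 _ hy]
        show f (n - 1 - (n - 1 - x), y) + n + y - n - y = f (x, y)
        rw [show n - 1 - (n - 1 - x) = x by omega]
        omega
      · rw [nth_out (show (Ffun n a f ⟨n - 1 - x, hxn⟩).card ≤ y by
          rw [Ffun_card h2 hf3]; omega)]
        have hnc : (x, y) ∉ cellsOf n a := by
          intro hc
          exact hy (cell_y_lt h2 hx hc)
        rw [hf1 _ hnc]
        omega
    · rw [show fOf n (Ffun n a f) (x, y) = 0 from dif_neg hx]
      rw [hf1 _ (not_mem_cells (le_of_not_gt hx))]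
end Chunk6e

section Chunk7
variable {n q : ℕ} {a : Fin n → ℕ}

lemma zchoose_neg (r : ℤ) (hr : r < 0) (k : ℕ) :
    zchoose r k = (-1 : ℚ) ^ k * ((((-r - 1).toNat + k).choose k : ℕ) : ℚ) := by
  set t := (-r - 1).toNat with ht
  have htr : (t : ℤ) = -r - 1 := Int.toNat_of_nonneg (by omega)
  have hrt : (r : ℚ) = -(t : ℚ) - 1 := by
    have : (r : ℚ) = ((r : ℤ) : ℚ) := rfl
    rw [this, show (r : ℤ) = -(t : ℤ) - 1 by omega]
    push_cast
    ring
  have key : ∀ m : ℕ, (∏ s ∈ Finset.range m, ((r : ℚ) - s)) =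
      (-1 : ℚ) ^ m * (((t + m).choose m : ℕ) : ℚ) * (m.factorial : ℚ) := by
    intro m
    induction m with
    | zero => simp
    | succ m ih =>
      rw [Finset.prod_range_succ, ih]
      have hfact : (t + m + 1) * (t + m).choose m = (t + m + 1).choose (m + 1) * (m + 1) := by
        have := Nat.add_one_mul_choose_eq (t + m) m
        simpa [Nat.succ_eq_add_one] using this
      have hcast : ((t + m + 1 : ℕ) : ℚ) * (((t + m).choose m : ℕ) : ℚ) =
          (((t + m + 1).choose (m + 1) : ℕ) : ℚ) * ((m + 1 : ℕ) : ℚ) := by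
        push_cast
        exact_mod_cast congrArg (fun z : ℕ => (z : ℚ)) hfact
      have hr2 : (r : ℚ) - m = -(((t + m + 1 : ℕ) : ℚ)) := by
        rw [hrt]; push_cast; ring
      rw [hr2]
      have hms : ((m + 1).factorial : ℚ) = ((m + 1 : ℕ) : ℚ) * (m.factorial : ℚ) := by
        rw [Nat.factorial_succ]; push_cast; ring
      rw [hms]
      have : t + (m + 1) = t + m + 1 := by omega
      rw [this, pow_succ]
      linear_combination (-((-1 : ℚ)) ^ m * (m.factorial : ℚ)) * hcast
  unfold zchoose
  rw [key k]
  have hkf : (k.factorial : ℚ) ≠ 0 := by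
    exact_mod_cast Nat.factorial_ne_zero k
  field_simp

lemma sq_le : n ≤ q → True := fun _ => trivial

end Chunk7


end Main
end LGV
open LGV in
theorem det_counts_weak_tableaux (n : ℕ) (a : Fin n → ℕ) (ha : StrictMono a)
    (h1 : ∀ i, 1 ≤ a i) (h2 : ∀ i : Fin n, a i ≤ 2 * (i : ℕ) + 1)
    (p : ℤ) (hp : p ≤ -(n : ℤ)) :
    (-1 : ℚ) ^ (∑ i : Fin n, (a i - ((i : ℕ) + 1))) *
      Matrix.det (Matrix.of fun i j : Fin n =>
        if (j : ℕ) + 1 ≤ a i then zchoose (p + (i : ℕ)) (a i - ((j : ℕ) + 1)) else 0) =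
      Matrix.det (Matrix.of fun i j : Fin n =>
        if (j : ℕ) + 1 ≤ a i then
          (((((-p).toNat + a i - ((i : ℕ) + 1)) - ((j : ℕ) + 1)).choose
            (a i - ((j : ℕ) + 1)) : ℕ) : ℚ)
        else 0) ∧
    Matrix.det (Matrix.of fun i j : Fin n =>
        if (j : ℕ) + 1 ≤ a i then
          (((((-p).toNat + a i - ((i : ℕ) + 1)) - ((j : ℕ) + 1)).choose
            (a i - ((j : ℕ) + 1)) : ℕ) : ℚ)
        else 0) =
      (Nat.card {f : ℕ × ℕ → ℕ //
        (∀ u, u ∉ cellsOf n a → f u = 0) ∧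
        (∀ u ∈ cellsOf n a, f u ≤ (-p).toNat - n) ∧
        (∀ x y, (x, y) ∈ cellsOf n a → (x, y + 1) ∈ cellsOf n a → f (x, y) ≤ f (x, y + 1)) ∧
        (∀ x y, (x, y) ∈ cellsOf n a → (x + 1, y) ∈ cellsOf n a → f (x, y) ≤ f (x + 1, y))} : ℚ) ∧
    (p = -(n : ℤ) →
      Matrix.det (Matrix.of fun i j : Fin n =>
        if (j : ℕ) + 1 ≤ a i then zchoose (p + (i : ℕ)) (a i - ((j : ℕ) + 1)) else 0) =
      (-1 : ℚ) ^ (∑ i : Fin n, (a i - ((i : ℕ) + 1)))) := by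
  classical
  set q : ℕ := (-p).toNat with hqdef
  have hq : n ≤ q := by rw [hqdef]; omega
  have ha1 : ∀ i : Fin n, (i : ℕ) + 1 ≤ a i := by
    intro i
    have hg := gap' ha (i := ⟨0, by have := i.2; omega⟩) (i' := i) (Nat.zero_le _)
    have h0 := h1 ⟨0, by have := i.2; omega⟩
    simp only [Fin.val_mk] at hg
    omega
  set d : ℕ := ∑ i : Fin n, (a i - ((i : ℕ) + 1)) with hddef
  set M1 := Matrix.of (fun i j : Fin n =>
    if (j : ℕ) + 1 ≤ a i then zchoose (p + (i : ℕ)) (a i - ((j : ℕ) + 1)) else 0) with hM1def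
  set M2 := Matrix.of (fun i j : Fin n =>
    if (j : ℕ) + 1 ≤ a i then
      ((((q + a i - ((i : ℕ) + 1)) - ((j : ℕ) + 1)).choose (a i - ((j : ℕ) + 1)) : ℕ) : ℚ)
    else 0) with hM2def
  -- part 2 : determinant equals the tableau count
  have hM2path : M2 = Matrix.of (fun i j : Fin n => ((pathSet n q a j i).card : ℚ)) := by
    rw [hM2def]
    ext i j
    rw [Matrix.of_apply, Matrix.of_apply]
    exact (card_pathSet n q a hq j i).symm
  have part2 : M2.det =
      (Nat.card {f : ℕ × ℕ → ℕ //
        (∀ u, u ∉ cellsOf n a → f u = 0) ∧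
        (∀ u ∈ cellsOf n a, f u ≤ q - n) ∧
        (∀ x y, (x, y) ∈ cellsOf n a → (x, y + 1) ∈ cellsOf n a → f (x, y) ≤ f (x, y + 1)) ∧
        (∀ x y, (x, y) ∈ cellsOf n a → (x + 1, y) ∈ cellsOf n a →
          f (x, y) ≤ f (x + 1, y))} : ℚ) := by
    rw [hM2path, det_eq_good hq ha ha1, good_card hq ha ha1 h2]
  -- part 1 : sign identity between the two determinants
  have key : ∀ i j : Fin n, M1 i j = (-1 : ℚ) ^ (a i) *
      (Matrix.of (fun i' j' : Fin n => (-1 : ℚ) ^ ((j' : ℕ) + 1) * M2 i' j') i j) := by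
    intro i j
    rw [hM1def, hM2def]
    rw [Matrix.of_apply, Matrix.of_apply, Matrix.of_apply]
    by_cases hg : (j : ℕ) + 1 ≤ a i
    · rw [if_pos hg, if_pos hg]
      have hr : p + (i : ℕ) < 0 := by have := i.2; omega
      rw [zchoose_neg _ hr]
      have hiq : (i : ℕ) + 1 ≤ q := le_trans i.2 hq
      have ht : (-(p + (i : ℕ)) - 1).toNat = q - ((i : ℕ) + 1) := by
        rw [hqdef]; omega
      rw [ht]
      have harg : q - ((i : ℕ) + 1) + (a i - ((j : ℕ) + 1)) =
          (q + a i - ((i : ℕ) + 1)) - ((j : ℕ) + 1) := by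
        have := ha1 i; omega
      rw [harg]
      have hsum : a i - ((j : ℕ) + 1) + ((j : ℕ) + 1) = a i := by omega
      have hsplit : (-1 : ℚ) ^ (a i - ((j : ℕ) + 1)) =
          (-1 : ℚ) ^ (a i) * (-1 : ℚ) ^ ((j : ℕ) + 1) := by
        calc (-1 : ℚ) ^ (a i - ((j : ℕ) + 1))
            = (-1 : ℚ) ^ (a i - ((j : ℕ) + 1)) *
              ((-1 : ℚ) ^ (((j : ℕ) + 1) + ((j : ℕ) + 1))) := by
              rw [Even.neg_one_pow ⟨(j : ℕ) + 1, rfl⟩, mul_one]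
          _ = ((-1 : ℚ) ^ ((a i - ((j : ℕ) + 1)) + ((j : ℕ) + 1))) * (-1 : ℚ) ^ ((j : ℕ) + 1) := by
              rw [← pow_add, ← pow_add]
              congr 1
              omega
          _ = (-1 : ℚ) ^ (a i) * (-1 : ℚ) ^ ((j : ℕ) + 1) := by rw [hsum]
      rw [hsplit]
      ring
    · rw [if_neg hg, if_neg hg]
      ring
  have hM1eq : M1 = Matrix.of (fun i j : Fin n => (-1 : ℚ) ^ (a i) *
      (Matrix.of (fun i' j' : Fin n => (-1 : ℚ) ^ ((j' : ℕ) + 1) * M2 i' j') i j)) := by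
    ext i j
    exact key i j
  have part1 : (-1 : ℚ) ^ d * M1.det = M2.det := by
    rw [hM1eq, Matrix.det_mul_column, Matrix.det_mul_row]
    rw [Finset.prod_pow_eq_pow_sum, Finset.prod_pow_eq_pow_sum]
    have hdB : d + (∑ j : Fin n, ((j : ℕ) + 1)) = ∑ i, a i := by
      rw [hddef, ← Finset.sum_add_distrib]
      apply Finset.sum_congr rfl
      intro i _
      have := ha1 i
      omega
    rw [← mul_assoc, ← mul_assoc, ← pow_add, ← pow_add]
    rw [show d + (∑ i, a i) + (∑ j : Fin n, ((j : ℕ) + 1)) = 2 * (∑ i, a i) by omega]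
    rw [pow_mul]
    norm_num
  refine ⟨part1, part2, ?_⟩
  -- part 3
  intro hpn
  have hqn : q = n := by rw [hqdef, hpn]; simp
  have hcount : Nat.card {f : ℕ × ℕ → ℕ //
      (∀ u, u ∉ cellsOf n a → f u = 0) ∧
      (∀ u ∈ cellsOf n a, f u ≤ q - n) ∧
      (∀ x y, (x, y) ∈ cellsOf n a → (x, y + 1) ∈ cellsOf n a → f (x, y) ≤ f (x, y + 1)) ∧
      (∀ x y, (x, y) ∈ cellsOf n a → (x + 1, y) ∈ cellsOf n a →
        f (x, y) ≤ f (x + 1, y))} = 1 := by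
    rw [Nat.card_eq_one_iff_unique]
    constructor
    · constructor
      rintro ⟨f, hf1, hf2, _, _⟩ ⟨g, hg1, hg2, _, _⟩
      apply Subtype.ext
      simp only []
      funext u
      have hzf : f u = 0 := by
        by_cases hu : u ∈ cellsOf n a
        · have := hf2 u hu; omega
        · exact hf1 u hu
      have hzg : g u = 0 := by
        by_cases hu : u ∈ cellsOf n a
        · have := hg2 u hu; omega
        · exact hg1 u hu
      rw [hzf, hzg]
    · exact ⟨⟨fun _ => 0, fun _ _ => rfl, fun _ _ => Nat.zero_le _,
        fun _ _ _ _ => le_refl 0, fun _ _ _ _ => le_refl 0⟩⟩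
  have hdet2 : M2.det = 1 := by
    rw [part2, hcount]
    norm_num
  have hd1 : (-1 : ℚ) ^ d * M1.det = 1 := by rw [part1, hdet2]
  have hsq : (-1 : ℚ) ^ d * (-1 : ℚ) ^ d = 1 := by
    rw [← pow_add]
    exact Even.neg_one_pow ⟨d, rfl⟩
  calc M1.det = ((-1 : ℚ) ^ d * (-1 : ℚ) ^ d) * M1.det := by rw [hsq, one_mul]
    _ = (-1 : ℚ) ^ d * ((-1 : ℚ) ^ d * M1.det) := by ring
    _ = (-1 : ℚ) ^ d := by rw [hd1, mul_one]
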